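/- Let χ > 0 and let V : [0,∞) → [0,∞] be lower semicontinuous. Let A = { r ≥ 0 : V(r) = 0 }, and suppose R ∈ (0,∞) satisfies: the Lebesgue measure of A ∩ (R,∞) is zero, while the Lebesgue measure of A ∩ (R̄,∞) is positive for every R̄ < R. Assume moreover that ∫_0^∞ r^{2k+2χ−1} e^{−2(n+χ) V(r)} dr < ∞ for all integers 0 ≤ k < n. For n ≥ 1 and 0 ≤ k ≤ n−1 define a_k⁽ⁿ⁾ > 0 by (a_k⁽ⁿ⁾)^{−1} = 2π ∫_0^∞ r^{2k+2χ−1} e^{−2(n+χ) V(r)} dr, and define a_k > 0 by (a_k)^{−1} = 2π ∫_A r^{2k+2χ−1} dr. Then the functions (z, w) ↦ ∑_{k=0}^{n−1} a_k⁽ⁿ⁾ z^k (conj w)^k converge, as n → ∞, uniformly on every compact subset of D_R × D_R to (z, w) ↦ ∑_{k=0}^∞ a_k z^k (conj w)^k, where D_R = { z ∈ ℂ : |z| < R }. -/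

import Mathlib

open MeasureTheory Filter Topology

/-- `eexpNeg v = e^{-v}` for `v ∈ [0,∞]`, as a value in `[0,∞]`,
with `e^{-∞} = 0`. -/
noncomputable def eexpNeg (v : ENNReal) : ENNReal :=
  if v = ⊤ then 0 else ENNReal.ofReal (Real.exp (-v.toReal))

lemma aux_uniform (R : ℝ) (c : ℕ → ℕ → ℝ) (b : ℕ → ℝ)
    (hb0 : ∀ k, 0 ≤ b k) (hc0 : ∀ n k, 0 ≤ c n k)
    (hcb : ∀ n k, k < n → c n k ≤ b k)
    (hlim : ∀ k, Tendsto (fun n => c n k) atTop (𝓝 (b k)))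
    (hgrow : ∀ ρ' : ℝ, 0 < ρ' → ρ' < R → ∃ C : ℝ, ∀ k, b k * (ρ' ^ 2) ^ k ≤ C) :
    ∀ S : Set (ℂ × ℂ), IsCompact S →
      S ⊆ {p : ℂ × ℂ | ‖p.1‖ < R ∧ ‖p.2‖ < R} →
      TendstoUniformlyOn
        (fun (n : ℕ) (p : ℂ × ℂ) => ∑ k ∈ Finset.range n,
          ((c n k : ℝ) : ℂ) * p.1 ^ k * (starRingEnd ℂ p.2) ^ k)
        (fun p : ℂ × ℂ => ∑' k : ℕ, ((b k : ℝ) : ℂ) * p.1 ^ k * (starRingEnd ℂ p.2) ^ k)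
        atTop S := by
  intro S hScomp hSsub
  rcases S.eq_empty_or_nonempty with rfl | hSne
  · exact tendstoUniformlyOn_empty
  have hcont : ContinuousOn (fun p : ℂ × ℂ => max ‖p.1‖ ‖p.2‖) S :=
    ((continuous_fst.norm).max
      (continuous_snd.norm)).continuousOn
  obtain ⟨ρ, hρ0, hρR, hρmax⟩ : ∃ ρ : ℝ, 0 ≤ ρ ∧ ρ < R ∧
      ∀ p ∈ S, ‖p.1‖ ≤ ρ ∧ ‖p.2‖ ≤ ρ := by
    obtain ⟨p₀, hp₀S, hp₀max⟩ := hScomp.exists_isMaxOn hSne hcont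
    refine ⟨max ‖p₀.1‖ ‖p₀.2‖,
      le_trans (norm_nonneg _) (le_max_left _ _),
      max_lt (hSsub hp₀S).1 (hSsub hp₀S).2, ?_⟩
    intro p hp
    have := hp₀max hp
    exact ⟨le_trans (le_max_left _ _) this, le_trans (le_max_right _ _) this⟩
  obtain ⟨ρ', hρ'0, hρρ', hρ'R⟩ : ∃ ρ' : ℝ, 0 < ρ' ∧ ρ < ρ' ∧ ρ' < R :=
    ⟨(ρ + R) / 2, by linarith, by linarith, by linarith⟩
  obtain ⟨C, hC⟩ := hgrow ρ' hρ'0 hρ'R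
  obtain ⟨u, hu0, hu1, huq⟩ : ∃ u : ℝ, 0 ≤ u ∧ u < 1 ∧
      ∀ k : ℕ, (ρ ^ 2) ^ k = (ρ' ^ 2) ^ k * u ^ k := by
    refine ⟨ρ ^ 2 / ρ' ^ 2, by positivity, ?_, ?_⟩
    · rw [div_lt_one (by positivity)]
      exact pow_lt_pow_left₀ hρρ' hρ0 two_ne_zero
    · intro k
      rw [div_pow, mul_div_cancel₀ _ (pow_ne_zero k (pow_ne_zero 2 hρ'0.ne'))]
  have hbound : ∀ k, b k * (ρ ^ 2) ^ k ≤ C * u ^ k := by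
    intro k
    rw [huq k, ← mul_assoc]
    exact mul_le_mul_of_nonneg_right (hC k) (pow_nonneg hu0 k)
  have hsumgeo : Summable (fun k : ℕ => C * u ^ k) :=
    (summable_geometric_of_lt_one hu0 hu1).mul_left C
  have hsumb : Summable (fun k : ℕ => b k * (ρ ^ 2) ^ k) :=
    hsumgeo.of_nonneg_of_le (fun k => mul_nonneg (hb0 k) (by positivity)) hbound
  set d : ℕ → ℕ → ℝ := fun n k => (if k < n then b k - c n k else b k) * (ρ ^ 2) ^ k with hd
  have hdpos : ∀ n k, k < n → d n k = (b k - c n k) * (ρ ^ 2) ^ k := by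
    intro n k hk; simp only [hd]; rw [if_pos hk]
  have hdneg : ∀ n k, ¬ k < n → d n k = b k * (ρ ^ 2) ^ k := by
    intro n k hk; simp only [hd]; rw [if_neg hk]
  have hd0 : ∀ n k, 0 ≤ d n k := by
    intro n k
    by_cases hk : k < n
    · rw [hdpos n k hk]; exact mul_nonneg (by linarith [hcb n k hk]) (by positivity)
    · rw [hdneg n k hk]; exact mul_nonneg (hb0 k) (by positivity)
  have hdle : ∀ n k, d n k ≤ b k * (ρ ^ 2) ^ k := by
    intro n k
    by_cases hk : k < n
    · rw [hdpos n k hk]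
      exact mul_le_mul_of_nonneg_right (by linarith [hc0 n k]) (by positivity)
    · rw [hdneg n k hk]
  have hdsum : ∀ n, Summable (d n) := fun n => hsumb.of_nonneg_of_le (hd0 n) (hdle n)
  have hDtend : Tendsto (fun n => ∑' k, d n k) atTop (𝓝 0) := by
    have h0 : (0:ℝ) = ∑' _ : ℕ, (0:ℝ) := tsum_zero.symm
    rw [h0]
    apply tendsto_tsum_of_dominated_convergence hsumb
    · intro k
      have h1 : Tendsto (fun n => (b k - c n k) * (ρ ^ 2) ^ k) atTop (𝓝 0) := by
        have h2 : Tendsto (fun n => b k - c n k) atTop (𝓝 (b k - b k)) :=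
          (tendsto_const_nhds (x := b k)).sub (hlim k)
        have h3 := h2.mul_const ((ρ ^ 2) ^ k)
        simpa using h3
      apply h1.congr'
      filter_upwards [eventually_gt_atTop k] with n hn
      rw [hdpos n k hn]
    · apply Eventually.of_forall
      intro n k
      rw [Real.norm_eq_abs, abs_of_nonneg (hd0 n k)]
      exact hdle n k
  rw [Metric.tendstoUniformlyOn_iff]
  intro ε hε
  filter_upwards [hDtend.eventually (gt_mem_nhds hε)] with n hn p hp
  obtain ⟨hz, hw⟩ := hρmax p hp
  have habs : ∀ k : ℕ, ‖p.1‖ ^ k * ‖p.2‖ ^ k ≤ (ρ ^ 2) ^ k := by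
    intro k
    calc ‖p.1‖ ^ k * ‖p.2‖ ^ k
        ≤ ρ ^ k * ρ ^ k := by
          apply mul_le_mul (pow_le_pow_left₀ (norm_nonneg _) hz k)
            (pow_le_pow_left₀ (norm_nonneg _) hw k) (by positivity) (by positivity)
      _ = (ρ ^ 2) ^ k := by rw [← mul_pow, sq]
  have hterm : ∀ k : ℕ, ‖((b k : ℝ) : ℂ) * p.1 ^ k * (starRingEnd ℂ p.2) ^ k‖
      ≤ b k * (ρ ^ 2) ^ k := by
    intro k
    rw [norm_mul, norm_mul, norm_pow, norm_pow, RCLike.norm_conj,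
      Complex.norm_real, Real.norm_eq_abs, abs_of_nonneg (hb0 k), mul_assoc]
    exact mul_le_mul_of_nonneg_left (habs k) (hb0 k)
  have hsumB : Summable (fun k : ℕ => ((b k : ℝ) : ℂ) * p.1 ^ k * (starRingEnd ℂ p.2) ^ k) :=
    Summable.of_norm_bounded hsumb hterm
  have hFn : (∑ k ∈ Finset.range n, ((c n k : ℝ) : ℂ) * p.1 ^ k * (starRingEnd ℂ p.2) ^ k)
      = ∑' k : ℕ, (if k < n then ((c n k : ℝ) : ℂ) * p.1 ^ k * (starRingEnd ℂ p.2) ^ k else 0) := by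
    rw [tsum_eq_sum (s := Finset.range n) (by intro k hk; rw [if_neg (by simpa using hk)])]
    exact (Finset.sum_congr rfl fun k hk => by rw [if_pos (Finset.mem_range.mp hk)]).symm
  have hsumF : Summable (fun k : ℕ =>
      (if k < n then ((c n k : ℝ) : ℂ) * p.1 ^ k * (starRingEnd ℂ p.2) ^ k else 0)) := by
    apply summable_of_ne_finset_zero (s := Finset.range n)
    intro k hk
    rw [if_neg (by simpa using hk)]
  rw [dist_eq_norm, hFn, ← Summable.tsum_sub hsumB hsumF]
  have hnorm_le : ∀ k : ℕ, ‖((b k : ℝ) : ℂ) * p.1 ^ k * (starRingEnd ℂ p.2) ^ k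
      - (if k < n then ((c n k : ℝ) : ℂ) * p.1 ^ k * (starRingEnd ℂ p.2) ^ k else 0)‖
      ≤ d n k := by
    intro k
    by_cases hk : k < n
    · rw [if_pos hk, hdpos n k hk]
      have heq : ((b k : ℝ) : ℂ) * p.1 ^ k * (starRingEnd ℂ p.2) ^ k
          - ((c n k : ℝ) : ℂ) * p.1 ^ k * (starRingEnd ℂ p.2) ^ k
          = (((b k - c n k : ℝ)) : ℂ) * p.1 ^ k * (starRingEnd ℂ p.2) ^ k := by
        push_cast; ring
      rw [heq, norm_mul, norm_mul, norm_pow, norm_pow, RCLike.norm_conj,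
        Complex.norm_real, Real.norm_eq_abs,
        abs_of_nonneg (by linarith [hcb n k hk] : (0:ℝ) ≤ b k - c n k), mul_assoc]
      exact mul_le_mul_of_nonneg_left (habs k) (by linarith [hcb n k hk])
    · rw [if_neg hk, sub_zero, hdneg n k hk]
      exact hterm k
  have hsumnorm : Summable (fun k : ℕ => ‖((b k : ℝ) : ℂ) * p.1 ^ k * (starRingEnd ℂ p.2) ^ k
      - (if k < n then ((c n k : ℝ) : ℂ) * p.1 ^ k * (starRingEnd ℂ p.2) ^ k else 0)‖) :=
    (hdsum n).of_nonneg_of_le (fun k => norm_nonneg _) hnorm_le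
  calc ‖∑' k : ℕ, (((b k : ℝ) : ℂ) * p.1 ^ k * (starRingEnd ℂ p.2) ^ k
      - (if k < n then ((c n k : ℝ) : ℂ) * p.1 ^ k * (starRingEnd ℂ p.2) ^ k else 0))‖
      ≤ ∑' k : ℕ, ‖((b k : ℝ) : ℂ) * p.1 ^ k * (starRingEnd ℂ p.2) ^ k
      - (if k < n then ((c n k : ℝ) : ℂ) * p.1 ^ k * (starRingEnd ℂ p.2) ^ k else 0)‖ :=
        norm_tsum_le_tsum_norm hsumnorm
    _ ≤ ∑' k : ℕ, d n k := Summable.tsum_le_tsum hnorm_le hsumnorm (hdsum n)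
    _ < ε := hn

lemma eexpNeg_top : eexpNeg ⊤ = 0 := if_pos rfl

lemma eexpNeg_of_ne_top {v : ENNReal} (hv : v ≠ ⊤) :
    eexpNeg v = ENNReal.ofReal (Real.exp (-v.toReal)) := if_neg hv

lemma eexpNeg_zero : eexpNeg 0 = 1 := by
  rw [eexpNeg_of_ne_top (by simp)]
  simp

lemma eexpNeg_anti : Antitone eexpNeg := by
  intro a b hab
  by_cases hb : b = ⊤
  · rw [hb, eexpNeg_top]; exact zero_le
  · have ha : a ≠ ⊤ := fun h => hb (top_le_iff.mp (h ▸ hab))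
    rw [eexpNeg_of_ne_top hb, eexpNeg_of_ne_top ha]
    exact ENNReal.ofReal_le_ofReal
      (Real.exp_le_exp.mpr (neg_le_neg (ENNReal.toReal_mono hb hab)))

lemma measurable_eexpNeg : Measurable eexpNeg := by
  unfold eexpNeg
  exact Measurable.ite (measurableSet_singleton ⊤) measurable_const
    (ENNReal.measurable_ofReal.comp (Real.measurable_exp.comp ENNReal.measurable_toReal.neg))

theorem particlesAtZeroPotentialKernel
    (χ : ℝ) (hχ : 0 < χ)
    (V : ℝ → ENNReal) (hV : LowerSemicontinuousOn V (Set.Ici 0))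
    (R : ℝ) (hR : 0 < R)
    (hA0 : volume ({r : ℝ | 0 ≤ r ∧ V r = 0} ∩ Set.Ioi R) = 0)
    (hA1 : ∀ R' : ℝ, R' < R → 0 < volume ({r : ℝ | 0 ≤ r ∧ V r = 0} ∩ Set.Ioi R'))
    (hfin : ∀ n k : ℕ, k < n →
      (∫⁻ r in Set.Ioi (0 : ℝ),
        ENNReal.ofReal (r ^ (2 * (k : ℝ) + 2 * χ - 1)) *
          eexpNeg (ENNReal.ofReal (2 * ((n : ℝ) + χ)) * V r)) ≠ ⊤) :
    ∀ S : Set (ℂ × ℂ), IsCompact S →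
      S ⊆ {p : ℂ × ℂ | ‖p.1‖ < R ∧ ‖p.2‖ < R} →
      TendstoUniformlyOn
        (fun (n : ℕ) (p : ℂ × ℂ) => ∑ k ∈ Finset.range n,
          (((2 * Real.pi *
              (∫⁻ r in Set.Ioi (0 : ℝ),
                ENNReal.ofReal (r ^ (2 * (k : ℝ) + 2 * χ - 1)) *
                  eexpNeg (ENNReal.ofReal (2 * ((n : ℝ) + χ)) * V r)).toReal)⁻¹ : ℝ) : ℂ) *
            p.1 ^ k * (starRingEnd ℂ p.2) ^ k)
        (fun p : ℂ × ℂ => ∑' k : ℕ,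
          (((2 * Real.pi *
              (∫⁻ r in {r : ℝ | 0 ≤ r ∧ V r = 0},
                ENNReal.ofReal (r ^ (2 * (k : ℝ) + 2 * χ - 1))).toReal)⁻¹ : ℝ) : ℂ) *
            p.1 ^ k * (starRingEnd ℂ p.2) ^ k)
        atTop S := by
  classical
  -- a measurable extension of `V` from `[0,∞)` to `ℝ`
  obtain ⟨W, hWmeas, hWV⟩ : ∃ W : ℝ → ENNReal, Measurable W ∧ ∀ r : ℝ, 0 ≤ r → W r = V r := by
    have hVr : LowerSemicontinuous (fun x : Set.Ici (0:ℝ) => V x) := by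
      intro x y hy
      have h1 := hV x x.2 y hy
      rw [← map_nhds_subtype_val] at h1
      exact eventually_map.mp h1
    refine ⟨Function.extend Subtype.val (fun x : Set.Ici (0:ℝ) => V x) (fun _ => 0),
      (MeasurableEmbedding.subtype_coe measurableSet_Ici).measurable_extend
        hVr.measurable measurable_const, ?_⟩
    intro r hr
    exact Subtype.val_injective.extend_apply _ _ (⟨r, hr⟩ : Set.Ici (0:ℝ))
  set A : Set ℝ := {r : ℝ | 0 ≤ r ∧ V r = 0} with hAdef
  have hAmem : ∀ r : ℝ, r ∈ A ↔ 0 ≤ r ∧ V r = 0 := fun r => Iff.rfl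
  have hfmeas : ∀ e : ℝ, Measurable (fun r : ℝ => ENNReal.ofReal (r ^ e)) :=
    fun e => ENNReal.measurable_ofReal.comp (measurable_id.pow measurable_const)
  have measA : MeasurableSet A := by
    have : A = Set.Ici 0 ∩ W ⁻¹' {0} := by
      ext r
      simp only [hAmem, Set.mem_inter_iff, Set.mem_Ici, Set.mem_preimage,
        Set.mem_singleton_iff]
      constructor
      · rintro ⟨h0, hv⟩; exact ⟨h0, by rw [hWV r h0, hv]⟩
      · rintro ⟨h0, hw⟩; exact ⟨h0, by rw [← hWV r h0, hw]⟩
    rw [this]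
    exact measurableSet_Ici.inter (hWmeas (measurableSet_singleton 0))
  have hae1 : (A ∩ Set.Ioi 0 : Set ℝ) =ᵐ[volume] A := by
    rw [MeasureTheory.ae_eq_set]
    constructor
    · have : (A ∩ Set.Ioi 0) \ A = ∅ := by
        ext x; simp only [Set.mem_diff, Set.mem_inter_iff, Set.mem_empty_iff_false, iff_false]
        rintro ⟨⟨h1, _⟩, h2⟩; exact h2 h1
      rw [this, measure_empty]
    · have hsub : A \ (A ∩ Set.Ioi 0) ⊆ {0} := by
        rintro x ⟨hxA, hx⟩
        have h0 : 0 ≤ x := ((hAmem x).mp hxA).1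
        have : ¬ (0 : ℝ) < x := fun h => hx ⟨hxA, h⟩
        simp only [Set.mem_singleton_iff]
        linarith [lt_or_eq_of_le h0]
      exact measure_mono_null hsub (measure_singleton 0)
  have hae2 : (A ∩ Set.Ioc 0 R : Set ℝ) =ᵐ[volume] A := by
    rw [MeasureTheory.ae_eq_set]
    constructor
    · have : (A ∩ Set.Ioc 0 R) \ A = ∅ := by
        ext x; simp only [Set.mem_diff, Set.mem_inter_iff, Set.mem_empty_iff_false, iff_false]
        rintro ⟨⟨h1, _⟩, h2⟩; exact h2 h1
      rw [this, measure_empty]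
    · have hsub : A \ (A ∩ Set.Ioc 0 R) ⊆ {0} ∪ (A ∩ Set.Ioi R) := by
        rintro x ⟨hxA, hx⟩
        have h0 : 0 ≤ x := ((hAmem x).mp hxA).1
        rcases eq_or_lt_of_le h0 with h | h
        · exact Or.inl (by simp [← h])
        · rcases le_or_gt x R with h1 | h1
          · exact absurd ⟨hxA, h, h1⟩ hx
          · exact Or.inr ⟨hxA, h1⟩
      exact measure_mono_null hsub (measure_union_null (measure_singleton 0) hA0)
  -- finiteness of the limit coefficients' integrals
  have hJfin : ∀ k : ℕ, (∫⁻ r in A, ENNReal.ofReal (r ^ (2 * (k:ℝ) + 2*χ - 1))) ≠ ⊤ := by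
    intro k
    have hk1 : (-1:ℝ) < 2*(k:ℝ) + 2*χ - 1 := by
      have : (0:ℝ) ≤ (k:ℝ) := Nat.cast_nonneg k
      linarith
    have hInt : IntegrableOn (fun r : ℝ => r ^ (2*(k:ℝ) + 2*χ - 1)) (Set.Ioc 0 R) volume := by
      have h := intervalIntegral.intervalIntegrable_rpow' (a := 0) (b := R) hk1
      rwa [intervalIntegrable_iff, Set.uIoc_of_le hR.le] at h
    have h1 : (∫⁻ r in A, ENNReal.ofReal (r ^ (2 * (k:ℝ) + 2*χ - 1)))
        = ∫⁻ r in A ∩ Set.Ioc 0 R, ENNReal.ofReal (r ^ (2 * (k:ℝ) + 2*χ - 1)) :=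
      (setLIntegral_congr hae2).symm
    rw [h1]
    exact ((lintegral_mono_set Set.inter_subset_right).trans_lt
      hInt.setLIntegral_lt_top).ne
  -- positivity of the limit coefficients' integrals
  have hJpos : ∀ k : ℕ, (∫⁻ r in A, ENNReal.ofReal (r ^ (2 * (k:ℝ) + 2*χ - 1))) ≠ 0 := by
    intro k h0
    have h1 : (∫⁻ r in A ∩ Set.Ioi 0, ENNReal.ofReal (r ^ (2*(k:ℝ) + 2*χ - 1))) = 0 := by
      rw [setLIntegral_congr hae1]; exact h0
    rw [lintegral_eq_zero_iff (hfmeas _)] at h1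
    have h2 := ae_iff.mp h1
    simp only [Pi.zero_apply] at h2
    rw [Measure.restrict_apply' (measA.inter measurableSet_Ioi)] at h2
    have h3 : A ∩ Set.Ioi 0 ⊆ {x : ℝ | ¬ ENNReal.ofReal (x ^ (2*(k:ℝ) + 2*χ - 1)) = 0} := by
      rintro r ⟨hrA, hr⟩
      simp only [Set.mem_setOf_eq, ENNReal.ofReal_eq_zero, not_le]
      exact Real.rpow_pos_of_pos hr _
    have h4 : volume (A ∩ Set.Ioi 0) = 0 := by
      apply measure_mono_null _ h2
      intro x hx
      exact Set.mem_inter (h3 hx) hx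
    exact absurd (hA1 0 hR) (by rw [h4]; exact lt_irrefl 0)
  -- rewriting the statement integrals in terms of `W`
  have hIW : ∀ n k : ℕ,
      (∫⁻ r in Set.Ioi (0:ℝ), ENNReal.ofReal (r ^ (2*(k:ℝ) + 2*χ - 1)) *
        eexpNeg (ENNReal.ofReal (2*((n:ℝ) + χ)) * V r))
      = ∫⁻ r in Set.Ioi (0:ℝ), ENNReal.ofReal (r ^ (2*(k:ℝ) + 2*χ - 1)) *
        eexpNeg (ENNReal.ofReal (2*((n:ℝ) + χ)) * W r) := by
    intro n k
    apply setLIntegral_congr_fun measurableSet_Ioi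
    intro r hr
    beta_reduce
    rw [hWV r (le_of_lt hr)]
  -- the limit integral is dominated by each `n`-th integral
  have hJle : ∀ n k : ℕ,
      (∫⁻ r in A, ENNReal.ofReal (r ^ (2*(k:ℝ) + 2*χ - 1)))
      ≤ ∫⁻ r in Set.Ioi (0:ℝ), ENNReal.ofReal (r ^ (2*(k:ℝ) + 2*χ - 1)) *
        eexpNeg (ENNReal.ofReal (2*((n:ℝ) + χ)) * V r) := by
    intro n k
    calc (∫⁻ r in A, ENNReal.ofReal (r ^ (2*(k:ℝ) + 2*χ - 1)))
        = ∫⁻ r in A ∩ Set.Ioi 0, ENNReal.ofReal (r ^ (2*(k:ℝ) + 2*χ - 1)) :=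
          (setLIntegral_congr hae1).symm
      _ = ∫⁻ r in A ∩ Set.Ioi 0, ENNReal.ofReal (r ^ (2*(k:ℝ) + 2*χ - 1)) *
            eexpNeg (ENNReal.ofReal (2*((n:ℝ) + χ)) * V r) := by
          apply setLIntegral_congr_fun (measA.inter measurableSet_Ioi)
          rintro r ⟨hrA, _⟩
          beta_reduce
          rw [((hAmem r).mp hrA).2, mul_zero, eexpNeg_zero, mul_one]
      _ ≤ ∫⁻ r in Set.Ioi (0:ℝ), ENNReal.ofReal (r ^ (2*(k:ℝ) + 2*χ - 1)) *
            eexpNeg (ENNReal.ofReal (2*((n:ℝ) + χ)) * V r) :=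
          lintegral_mono_set Set.inter_subset_right
  -- convergence of the integrals
  have hItend : ∀ k : ℕ, Tendsto (fun n : ℕ =>
      ∫⁻ r in Set.Ioi (0:ℝ), ENNReal.ofReal (r ^ (2*(k:ℝ) + 2*χ - 1)) *
        eexpNeg (ENNReal.ofReal (2*((n:ℝ) + χ)) * V r)) atTop
      (𝓝 (∫⁻ r in A, ENNReal.ofReal (r ^ (2*(k:ℝ) + 2*χ - 1)))) := by
    intro k
    have hJind : (∫⁻ r in A, ENNReal.ofReal (r ^ (2*(k:ℝ) + 2*χ - 1)))
        = ∫⁻ r in Set.Ioi (0:ℝ),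
            Set.indicator (W ⁻¹' {0}) (fun r => ENNReal.ofReal (r ^ (2*(k:ℝ) + 2*χ - 1))) r := by
      rw [lintegral_indicator (hWmeas (measurableSet_singleton 0)),
        Measure.restrict_restrict (hWmeas (measurableSet_singleton 0))]
      have hseq : W ⁻¹' {0} ∩ Set.Ioi 0 = A ∩ Set.Ioi 0 := by
        ext r
        simp only [Set.mem_inter_iff, Set.mem_preimage, Set.mem_singleton_iff, Set.mem_Ioi,
          hAmem]
        constructor
        · rintro ⟨hw, hr⟩; exact ⟨⟨le_of_lt hr, by rw [← hWV r (le_of_lt hr), hw]⟩, hr⟩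
        · rintro ⟨⟨h0, hv⟩, hr⟩; exact ⟨by rw [hWV r h0, hv], hr⟩
      rw [hseq]
      exact (setLIntegral_congr hae1).symm
    rw [hJind]
    simp only [hIW]
    rw [← tendsto_add_atTop_iff_nat (k+1)]
    apply tendsto_lintegral_of_dominated_convergence
      (bound := fun r => ENNReal.ofReal (r ^ (2*(k:ℝ) + 2*χ - 1)) *
        eexpNeg (ENNReal.ofReal (2*(((k+1:ℕ):ℝ) + χ)) * W r))
    · intro n
      exact (hfmeas _).mul (measurable_eexpNeg.comp (measurable_const.mul hWmeas))
    · intro n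
      apply ae_of_all
      intro r
      apply mul_le_mul_right
      apply eexpNeg_anti
      apply mul_le_mul_left
      apply ENNReal.ofReal_le_ofReal
      push_cast
      linarith [Nat.cast_nonneg (α := ℝ) n]
    · rw [← hIW (k+1) k]
      exact hfin (k+1) k (Nat.lt_succ_self k)
    · apply (ae_restrict_iff' measurableSet_Ioi).mpr
      apply ae_of_all
      intro r hr
      by_cases hW0 : W r = 0
      · rw [Set.indicator_of_mem (by exact hW0 : r ∈ W ⁻¹' {0})]
        apply Tendsto.congr (f₁ := fun _ : ℕ => ENNReal.ofReal (r ^ (2*(k:ℝ) + 2*χ - 1)))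
        · intro n
          rw [hW0, mul_zero, eexpNeg_zero, mul_one]
        · exact tendsto_const_nhds
      · rw [Set.indicator_of_notMem (by exact hW0 : r ∉ W ⁻¹' {0})]
        by_cases hWt : W r = ⊤
        · apply Tendsto.congr (f₁ := fun _ : ℕ => (0:ENNReal))
          · intro n
            rw [hWt, ENNReal.mul_top (by
                simp only [ne_eq, ENNReal.ofReal_eq_zero, not_le]
                positivity), eexpNeg_top, mul_zero]
          · exact tendsto_const_nhds
        · have ht : 0 < (W r).toReal := ENNReal.toReal_pos hW0 hWt
          have hmulne : ∀ n : ℕ,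
              ENNReal.ofReal (2*(((n+(k+1):ℕ):ℝ) + χ)) * W r ≠ ⊤ :=
            fun n => ENNReal.mul_ne_top ENNReal.ofReal_ne_top hWt
          have hlim0 : Tendsto (fun n : ℕ =>
              ENNReal.ofReal (Real.exp (-(2*(((n+(k+1):ℕ):ℝ) + χ) * (W r).toReal))))
              atTop (𝓝 0) := by
            have ha : Tendsto (fun n : ℕ => ((n + (k+1) : ℕ):ℝ)) atTop atTop :=
              tendsto_natCast_atTop_atTop.comp (tendsto_add_atTop_nat (k+1))
            have hb := tendsto_atTop_add_const_right atTop χ ha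
            have hc := hb.const_mul_atTop (by norm_num : (0:ℝ) < 2)
            have hd := hc.atTop_mul_const ht
            have he := (Real.tendsto_exp_atBot).comp (tendsto_neg_atTop_atBot.comp hd)
            have hf := ENNReal.tendsto_ofReal he
            simpa using hf
          have := ENNReal.Tendsto.const_mul hlim0
            (Or.inr (ENNReal.ofReal_ne_top (r := r ^ (2*(k:ℝ) + 2*χ - 1))))
          rw [mul_zero] at this
          apply Tendsto.congr _ this
          intro n
          rw [eexpNeg_of_ne_top (hmulne n), ENNReal.toReal_mul,
            ENNReal.toReal_ofReal (by positivity)]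
  -- growth bound for the limit coefficients
  have hgrow : ∀ ρ' : ℝ, 0 < ρ' → ρ' < R → ∃ C : ℝ, ∀ k : ℕ,
      (2 * Real.pi * (∫⁻ r in A, ENNReal.ofReal (r ^ (2*(k:ℝ) + 2*χ - 1))).toReal)⁻¹
        * (ρ' ^ 2) ^ k ≤ C := by
    intro ρ' hρ'0 hρ'R
    have hvol : 0 < volume (A ∩ Set.Ioc ρ' R) := by
      by_contra h
      rw [not_lt, le_zero_iff] at h
      have hsub2 : A ∩ Set.Ioi ρ' ⊆ (A ∩ Set.Ioc ρ' R) ∪ (A ∩ Set.Ioi R) := by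
        rintro r ⟨hrA, hr⟩
        rcases le_or_gt r R with h1 | h1
        · exact Or.inl ⟨hrA, hr, h1⟩
        · exact Or.inr ⟨hrA, h1⟩
      have h2 := measure_mono_null hsub2 (measure_union_null h hA0)
      exact absurd (hA1 ρ' hρ'R) (by rw [h2]; exact lt_irrefl 0)
    obtain ⟨m, hm0, hmtop, hmle⟩ : ∃ m : ENNReal, m ≠ 0 ∧ m ≠ ⊤ ∧
        ∀ k : ℕ, ENNReal.ofReal ((ρ' ^ 2) ^ k) * m
          ≤ ∫⁻ r in A, ENNReal.ofReal (r ^ (2*(k:ℝ) + 2*χ - 1)) := by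
      refine ⟨∫⁻ r in A ∩ Set.Ioc ρ' R, ENNReal.ofReal (r ^ (2*χ - 1)), ?_, ?_, ?_⟩
      · intro h0
        rw [lintegral_eq_zero_iff (hfmeas _)] at h0
        have h2 := ae_iff.mp h0
        simp only [Pi.zero_apply] at h2
        rw [Measure.restrict_apply' (measA.inter measurableSet_Ioc)] at h2
        have h3 : A ∩ Set.Ioc ρ' R ⊆ {x : ℝ | ¬ ENNReal.ofReal (x ^ (2*χ - 1)) = 0} := by
          rintro r ⟨hrA, hr1, hr2⟩
          simp only [Set.mem_setOf_eq, ENNReal.ofReal_eq_zero, not_le]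
          exact Real.rpow_pos_of_pos (lt_trans hρ'0 hr1) _
        have h4 : volume (A ∩ Set.Ioc ρ' R) = 0 := by
          apply measure_mono_null _ h2
          intro x hx
          exact Set.mem_inter (h3 hx) hx
        rw [h4] at hvol
        exact lt_irrefl 0 hvol
      · have hCm : ∀ r ∈ A ∩ Set.Ioc ρ' R, ENNReal.ofReal (r ^ (2*χ - 1))
            ≤ ENNReal.ofReal (max (ρ' ^ (2*χ - 1)) (R ^ (2*χ - 1))) := by
          rintro r ⟨hrA, hr1, hr2⟩
          apply ENNReal.ofReal_le_ofReal
          rcases le_or_gt 0 (2*χ - 1) with h | h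
          · exact le_max_of_le_right (Real.rpow_le_rpow (le_of_lt (lt_trans hρ'0 hr1)) hr2 h)
          · exact le_max_of_le_left (Real.rpow_le_rpow_of_nonpos hρ'0 hr1.le h.le)
        have h5 : (∫⁻ r in A ∩ Set.Ioc ρ' R, ENNReal.ofReal (r ^ (2*χ - 1)))
            ≤ ENNReal.ofReal (max (ρ' ^ (2*χ - 1)) (R ^ (2*χ - 1)))
              * volume (A ∩ Set.Ioc ρ' R) := by
          rw [← setLIntegral_const]
          exact setLIntegral_mono' (measA.inter measurableSet_Ioc) hCm
        apply ne_top_of_le_ne_top _ h5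
        exact (ENNReal.mul_lt_top ENNReal.ofReal_lt_top
          (lt_of_le_of_lt (measure_mono Set.inter_subset_right) measure_Ioc_lt_top)).ne
      · intro k
        have h6 : ∀ r ∈ A ∩ Set.Ioc ρ' R,
            ENNReal.ofReal ((ρ' ^ 2) ^ k) * ENNReal.ofReal (r ^ (2*χ - 1))
              ≤ ENNReal.ofReal (r ^ (2*(k:ℝ) + 2*χ - 1)) := by
          rintro r ⟨hrA, hr1, hr2⟩
          have hr0 : 0 < r := lt_trans hρ'0 hr1
          rw [← ENNReal.ofReal_mul (by positivity)]
          apply ENNReal.ofReal_le_ofReal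
          have hsplit : r ^ (2*(k:ℝ) + 2*χ - 1) = r ^ (2*(k:ℝ)) * r ^ (2*χ - 1) := by
            rw [← Real.rpow_add hr0]
            ring_nf
          rw [hsplit]
          apply mul_le_mul_of_nonneg_right _ (Real.rpow_nonneg hr0.le _)
          calc (ρ' ^ 2) ^ k = ρ' ^ (2*(k:ℝ)) := by
                rw [← Real.rpow_natCast (ρ' ^ 2) k, ← Real.rpow_natCast ρ' 2,
                  ← Real.rpow_mul hρ'0.le]
                norm_num
            _ ≤ r ^ (2*(k:ℝ)) := Real.rpow_le_rpow hρ'0.le hr1.le (by positivity)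
        calc ENNReal.ofReal ((ρ' ^ 2) ^ k)
              * (∫⁻ r in A ∩ Set.Ioc ρ' R, ENNReal.ofReal (r ^ (2*χ - 1)))
            = ∫⁻ r in A ∩ Set.Ioc ρ' R,
                ENNReal.ofReal ((ρ' ^ 2) ^ k) * ENNReal.ofReal (r ^ (2*χ - 1)) :=
              (lintegral_const_mul _ (hfmeas _)).symm
          _ ≤ ∫⁻ r in A ∩ Set.Ioc ρ' R, ENNReal.ofReal (r ^ (2*(k:ℝ) + 2*χ - 1)) :=
              setLIntegral_mono' (measA.inter measurableSet_Ioc) h6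
          _ ≤ ∫⁻ r in A, ENNReal.ofReal (r ^ (2*(k:ℝ) + 2*χ - 1)) :=
              lintegral_mono_set Set.inter_subset_left
    refine ⟨(2 * Real.pi * m.toReal)⁻¹, ?_⟩
    intro k
    have h7 : (ρ' ^ 2) ^ k * m.toReal
        ≤ (∫⁻ r in A, ENNReal.ofReal (r ^ (2*(k:ℝ) + 2*χ - 1))).toReal := by
      have := ENNReal.toReal_mono (hJfin k) (hmle k)
      rwa [ENNReal.toReal_mul, ENNReal.toReal_ofReal (by positivity)] at this
    have hmpos : 0 < m.toReal := ENNReal.toReal_pos hm0 hmtop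
    have hq : 0 < (ρ' ^ 2) ^ k := by positivity
    have h8 : (2 * Real.pi * (∫⁻ r in A, ENNReal.ofReal (r ^ (2*(k:ℝ) + 2*χ - 1))).toReal)⁻¹
        ≤ (2 * Real.pi * ((ρ' ^ 2) ^ k * m.toReal))⁻¹ := by
      apply inv_anti₀ (by positivity)
      exact mul_le_mul_of_nonneg_left h7 (by positivity)
    calc (2 * Real.pi * (∫⁻ r in A, ENNReal.ofReal (r ^ (2*(k:ℝ) + 2*χ - 1))).toReal)⁻¹
          * (ρ' ^ 2) ^ k
        ≤ (2 * Real.pi * ((ρ' ^ 2) ^ k * m.toReal))⁻¹ * (ρ' ^ 2) ^ k :=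
          mul_le_mul_of_nonneg_right h8 hq.le
      _ = (2 * Real.pi * m.toReal)⁻¹ := by
          rw [show (2 * Real.pi * ((ρ' ^ 2) ^ k * m.toReal))
              = (2 * Real.pi * m.toReal) * (ρ' ^ 2) ^ k by ring,
            mul_inv, mul_assoc, inv_mul_cancel₀ hq.ne', mul_one]
  -- the remaining hypotheses of the abstract lemma
  have hb0 : ∀ k : ℕ,
      0 ≤ (2 * Real.pi * (∫⁻ r in A, ENNReal.ofReal (r ^ (2*(k:ℝ) + 2*χ - 1))).toReal)⁻¹ := by
    intro k; positivity
  have hc0 : ∀ n k : ℕ,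
      0 ≤ (2 * Real.pi * (∫⁻ r in Set.Ioi (0:ℝ), ENNReal.ofReal (r ^ (2*(k:ℝ) + 2*χ - 1)) *
        eexpNeg (ENNReal.ofReal (2*((n:ℝ) + χ)) * V r)).toReal)⁻¹ := by
    intro n k; positivity
  have hJtpos : ∀ k : ℕ,
      0 < (∫⁻ r in A, ENNReal.ofReal (r ^ (2*(k:ℝ) + 2*χ - 1))).toReal :=
    fun k => ENNReal.toReal_pos (hJpos k) (hJfin k)
  have hcb : ∀ n k : ℕ, k < n →
      (2 * Real.pi * (∫⁻ r in Set.Ioi (0:ℝ), ENNReal.ofReal (r ^ (2*(k:ℝ) + 2*χ - 1)) *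
        eexpNeg (ENNReal.ofReal (2*((n:ℝ) + χ)) * V r)).toReal)⁻¹
      ≤ (2 * Real.pi * (∫⁻ r in A, ENNReal.ofReal (r ^ (2*(k:ℝ) + 2*χ - 1))).toReal)⁻¹ := by
    intro n k hkn
    have h := ENNReal.toReal_mono (hfin n k hkn) (hJle n k)
    apply inv_anti₀ (mul_pos (by positivity) (hJtpos k))
    exact mul_le_mul_of_nonneg_left h (by positivity)
  have hlim : ∀ k : ℕ, Tendsto (fun n : ℕ =>
      (2 * Real.pi * (∫⁻ r in Set.Ioi (0:ℝ), ENNReal.ofReal (r ^ (2*(k:ℝ) + 2*χ - 1)) *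
        eexpNeg (ENNReal.ofReal (2*((n:ℝ) + χ)) * V r)).toReal)⁻¹) atTop
      (𝓝 ((2 * Real.pi * (∫⁻ r in A, ENNReal.ofReal (r ^ (2*(k:ℝ) + 2*χ - 1))).toReal)⁻¹)) := by
    intro k
    have h1 : Tendsto (fun n : ℕ =>
        (∫⁻ r in Set.Ioi (0:ℝ), ENNReal.ofReal (r ^ (2*(k:ℝ) + 2*χ - 1)) *
          eexpNeg (ENNReal.ofReal (2*((n:ℝ) + χ)) * V r)).toReal) atTop
        (𝓝 ((∫⁻ r in A, ENNReal.ofReal (r ^ (2*(k:ℝ) + 2*χ - 1))).toReal)) :=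
      (ENNReal.tendsto_toReal (hJfin k)).comp (hItend k)
    have h2 := h1.const_mul (2 * Real.pi)
    exact h2.inv₀ (ne_of_gt (mul_pos (by positivity) (hJtpos k)))
  exact aux_uniform R
    (fun n k => (2 * Real.pi * (∫⁻ r in Set.Ioi (0:ℝ),
      ENNReal.ofReal (r ^ (2*(k:ℝ) + 2*χ - 1)) *
        eexpNeg (ENNReal.ofReal (2*((n:ℝ) + χ)) * V r)).toReal)⁻¹)
    (fun k => (2 * Real.pi * (∫⁻ r in A,
      ENNReal.ofReal (r ^ (2*(k:ℝ) + 2*χ - 1))).toReal)⁻¹)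
    hb0 hc0 hcb hlim hgrow
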